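/- Let {S_n} ⊂ Aut₀(C^k), k ≥ 2, satisfy the uniform upper-bound condition at the origin and let Ω_S be the basin of attraction at the origin. Then the infinitesimal Kobayashi metric on Ω_S vanishes identically: for every p ∈ Ω_S, every tangent vector ξ, and every R > 0, there exists a holomorphic map τ : Δ(0;1) → Ω_S with τ(0) = p and τ'(0) = Rξ. -/

import Mathlib

open Filter Metric Set

/-- Backward compositions of the inverse maps: `scInv Sinv n = Sinv 0 ∘ ⋯ ∘ Sinv n`. -/
noncomputable def scInv {E : Type*} (Sinv : ℕ → E → E) : ℕ → E → E
  | 0 => Sinv 0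
  | n + 1 => fun z => scInv Sinv n (Sinv (n + 1) z)

/-- for `{S_n} ⊆ Aut₀(ℂ^k)` satisfying the uniform upper-bound condition,
the infinitesimal Kobayashi metric on the basin of attraction `Ω_S` at the origin vanishes
identically: for every `p ∈ Ω_S`, tangent vector `ξ` and `R > 0` there is a holomorphic
map `τ : Δ(0;1) → Ω_S` with `τ(0) = p` and `τ'(0) = Rξ`. -/
theorem stmt6 {k : ℕ} (hk : 2 ≤ k)
    (S Sinv : ℕ → EuclideanSpace ℂ (Fin k) → EuclideanSpace ℂ (Fin k))
    (hdiff : ∀ n, Differentiable ℂ (S n)) (hdiffinv : ∀ n, Differentiable ℂ (Sinv n))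
    (hinv : ∀ n z, Sinv n (S n z) = z) (hinv' : ∀ n z, S n (Sinv n z) = z)
    (hfix : ∀ n, S n 0 = 0)
    (r C : ℝ) (hr : 0 < r) (hC : C < 1)
    (hS : ∀ n, ∀ z ∈ ball (0 : EuclideanSpace ℂ (Fin k)) r, ‖S n z‖ ≤ C * ‖z‖)
    (Sc : ℕ → EuclideanSpace ℂ (Fin k) → EuclideanSpace ℂ (Fin k))
    (hSc0 : ∀ z, Sc 0 z = S 0 z) (hScS : ∀ n z, Sc (n + 1) z = S (n + 1) (Sc n z)) :
    ∀ p ∈ {z | Tendsto (fun n => Sc n z) atTop (nhds 0)},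
      ∀ ξ : EuclideanSpace ℂ (Fin k), ∀ R : ℝ, 0 < R →
        ∃ τ : ℂ → EuclideanSpace ℂ (Fin k),
          DifferentiableOn ℂ τ (ball (0 : ℂ) 1) ∧
          MapsTo τ (ball (0 : ℂ) 1) {z | Tendsto (fun n => Sc n z) atTop (nhds 0)} ∧
          τ 0 = p ∧ HasDerivAt τ (R • ξ) 0 := by
  intro p hp ξ R hR
  have hp' : Tendsto (fun n => Sc n p) atTop (nhds 0) := hp
  -- `C` is nonnegative
  have hC0 : 0 ≤ C := by
    set z : EuclideanSpace ℂ (Fin k) :=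
      EuclideanSpace.single (⟨0, by omega⟩ : Fin k) ((r / 2 : ℝ) : ℂ) with hz
    have hzn : ‖z‖ = r / 2 := by
      rw [hz, EuclideanSpace.norm_single, Complex.norm_real, Real.norm_eq_abs,
        abs_of_pos (by linarith)]
    have hzb : z ∈ ball (0 : EuclideanSpace ℂ (Fin k)) r := by
      rw [mem_ball_zero_iff, hzn]; linarith
    have h1 : (0 : ℝ) ≤ C * ‖z‖ := le_trans (norm_nonneg _) (hS 0 z hzb)
    nlinarith [hzn]
  -- differentiability of the compositions
  have hScdiff : ∀ n, Differentiable ℂ (Sc n) := by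
    intro n; induction n with
    | zero => have h : Sc 0 = S 0 := funext hSc0; rw [h]; exact hdiff 0
    | succ n ih =>
      have h : Sc (n + 1) = fun z => S (n + 1) (Sc n z) := funext (hScS n)
      rw [h]; exact (hdiff (n + 1)).comp ih
  have hScinvdiff : ∀ n, Differentiable ℂ (scInv Sinv n) := by
    intro n; induction n with
    | zero => exact hdiffinv 0
    | succ n ih => exact ih.comp (hdiffinv (n + 1))
  -- `scInv` is a two-sided inverse of `Sc`
  have hleft : ∀ n z, scInv Sinv n (Sc n z) = z := by
    intro n; induction n with
    | zero => intro z; rw [hSc0]; exact hinv 0 z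
    | succ n ih => intro z; rw [hScS]; show scInv Sinv n (Sinv (n + 1) _) = z
                   rw [hinv, ih]
  have hright : ∀ n z, Sc n (scInv Sinv n z) = z := by
    intro n; induction n with
    | zero => intro z; rw [hSc0]; exact hinv' 0 z
    | succ n ih => intro z; rw [hScS]; show S (n + 1) (Sc n (scInv Sinv n (Sinv (n + 1) z))) = z
                   rw [ih, hinv']
  -- each `S n` maps the ball into itself
  have hball : ∀ n z, z ∈ ball (0 : EuclideanSpace ℂ (Fin k)) r →
      S n z ∈ ball (0 : EuclideanSpace ℂ (Fin k)) r := by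
    intro n z hz
    rw [mem_ball_zero_iff] at hz ⊢
    have h1 := hS n z (by rwa [mem_ball_zero_iff])
    nlinarith [norm_nonneg z]
  -- iterated contraction from time `n` on
  have htail : ∀ n z, Sc n z ∈ ball (0 : EuclideanSpace ℂ (Fin k)) r →
      ∀ j, ‖Sc (n + j) z‖ ≤ C ^ j * ‖Sc n z‖ ∧
        Sc (n + j) z ∈ ball (0 : EuclideanSpace ℂ (Fin k)) r := by
    intro n z hz j
    induction j with
    | zero => simpa using hz
    | succ j ih =>
      have hstep : Sc (n + (j + 1)) z = S (n + j + 1) (Sc (n + j) z) := by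
        have := hScS (n + j) z; rwa [show n + j + 1 = n + (j + 1) by omega] at this
      constructor
      · rw [hstep]
        calc ‖S (n + j + 1) (Sc (n + j) z)‖ ≤ C * ‖Sc (n + j) z‖ :=
              hS _ _ ih.2
          _ ≤ C * (C ^ j * ‖Sc n z‖) := by
              exact mul_le_mul_of_nonneg_left ih.1 hC0
          _ = C ^ (j + 1) * ‖Sc n z‖ := by ring
      · rw [hstep]; exact hball _ _ ih.2
  -- once some iterate lands in the ball, the orbit tends to `0`
  have hbasin : ∀ n z, Sc n z ∈ ball (0 : EuclideanSpace ℂ (Fin k)) r →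
      Tendsto (fun m => Sc m z) atTop (nhds 0) := by
    intro n z hz
    apply squeeze_zero_norm' (a := fun m => C ^ (m - n) * ‖Sc n z‖)
    · filter_upwards [eventually_ge_atTop n] with m hm
      have := (htail n z hz (m - n)).1
      rwa [show n + (m - n) = m by omega] at this
    · have h1 : Tendsto (fun m : ℕ => C ^ (m - n)) atTop (nhds 0) :=
        (tendsto_pow_atTop_nhds_zero_of_lt_one hC0 hC).comp (tendsto_sub_atTop_nat n)
      simpa using h1.mul_const ‖Sc n z‖
  -- choose `N` with `Sc N p` in the half-ball
  obtain ⟨N, hN⟩ :=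
    (hp'.eventually (ball_mem_nhds (0 : EuclideanSpace ℂ (Fin k)) (half_pos hr))).exists
  -- continuity: a ball around `p` mapped by `Sc N` into the half-ball
  obtain ⟨ρ, hρ, hρball⟩ : ∃ ρ > 0, ∀ w ∈ ball p ρ,
      Sc N w ∈ ball (0 : EuclideanSpace ℂ (Fin k)) (r / 2) := by
    have hcont : ContinuousAt (Sc N) p := ((hScdiff N) p).continuousAt
    rcases Metric.continuousAt_iff.mp hcont (r / 2 - dist (Sc N p) 0) (by linarith) with
      ⟨ρ, hρ, hsub⟩
    refine ⟨ρ, hρ, fun w hw => ?_⟩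
    have h1 := hsub (mem_ball.mp hw)
    have h2 := dist_triangle (Sc N w) (Sc N p) 0
    rw [mem_ball]
    linarith
  set δ : ℝ := ρ / (‖ξ‖ + 1) with hδdef
  have hδ : 0 < δ := div_pos hρ (by positivity)
  have hline : ∀ x : ℂ, x ∈ ball (0 : ℂ) δ → p + x • ξ ∈ ball p ρ := by
    intro x hx
    rw [mem_ball_zero_iff] at hx
    rw [mem_ball_iff_norm]
    have : ‖p + x • ξ - p‖ = ‖x‖ * ‖ξ‖ := by
      rw [add_sub_cancel_left, norm_smul]
    rw [this]
    have h1 : ‖x‖ * ‖ξ‖ ≤ ‖x‖ * (‖ξ‖ + 1) := by nlinarith [norm_nonneg x]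
    have h2 : ‖x‖ * (‖ξ‖ + 1) < δ * (‖ξ‖ + 1) := by
      have := norm_nonneg ξ; nlinarith
    have h3 : δ * (‖ξ‖ + 1) = ρ := by
      rw [hδdef]; field_simp
    linarith
  -- the key derivative estimate, via the Schwarz lemma
  have hkey : ∀ m, N ≤ m →
      ‖(fderiv ℂ (Sc m) p) ξ‖ ≤ (C ^ (m - N) * r + 1 / (m + 1)) / δ := by
    intro m hm
    set g : ℂ → EuclideanSpace ℂ (Fin k) := fun x => Sc m (p + x • ξ) with hgdef
    have hgd : Differentiable ℂ g := by
      apply (hScdiff m).comp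
      exact (differentiable_id.smul_const ξ).const_add p
    have hbound : ∀ x ∈ ball (0 : ℂ) δ, ‖g x‖ ≤ C ^ (m - N) * (r / 2) := by
      intro x hx
      have hw := hρball _ (hline x hx)
      have := (htail N (p + x • ξ) (ball_subset_ball (by linarith) hw) (m - N)).1
      rw [show N + (m - N) = m by omega] at this
      calc ‖g x‖ ≤ C ^ (m - N) * ‖Sc N (p + x • ξ)‖ := this
        _ ≤ C ^ (m - N) * (r / 2) := by
            apply mul_le_mul_of_nonneg_left _ (pow_nonneg hC0 _)
            exact le_of_lt (mem_ball_zero_iff.mp hw)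
    have hmaps : MapsTo g (ball (0 : ℂ) δ) (ball (g 0) (C ^ (m - N) * r + 1 / (m + 1))) := by
      intro x hx
      rw [mem_ball_iff_norm]
      have h0 : (0 : ℂ) ∈ ball (0 : ℂ) δ := mem_ball_self hδ
      have h1 := hbound x hx
      have h2 := hbound 0 h0
      have h3 : ‖g x - g 0‖ ≤ ‖g x‖ + ‖g 0‖ := norm_sub_le _ _
      have h4 : (0 : ℝ) < 1 / (m + 1 : ℝ) := by positivity
      linarith
    have hschwarz := Complex.norm_deriv_le_div_of_mapsTo_ball
      (hgd.differentiableOn) (hmaps.mono_right ball_subset_closedBall) hδ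
    have hgd0 : HasDerivAt g ((fderiv ℂ (Sc m) p) ξ) 0 := by
      have hl : HasDerivAt (fun x : ℂ => p + x • ξ) ξ 0 := by
        simpa using ((hasDerivAt_id (0 : ℂ)).smul_const ξ).const_add p
      have hf : HasFDerivAt (Sc m) (fderiv ℂ (Sc m) p) (p + (0 : ℂ) • ξ) := by
        simpa using ((hScdiff m) p).hasFDerivAt
      exact hf.comp_hasDerivAt 0 hl
    rwa [hgd0.deriv] at hschwarz
  -- choose `n` large enough
  have hlim : Tendsto (fun m : ℕ => ‖Sc m p‖ + R * ((C ^ (m - N) * r + 1 / (m + 1)) / δ))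
      atTop (nhds 0) := by
    have h1 : Tendsto (fun m : ℕ => ‖Sc m p‖) atTop (nhds 0) :=
      tendsto_zero_iff_norm_tendsto_zero.mp hp'
    have h2 : Tendsto (fun m : ℕ => C ^ (m - N)) atTop (nhds 0) :=
      (tendsto_pow_atTop_nhds_zero_of_lt_one hC0 hC).comp (tendsto_sub_atTop_nat N)
    have h3 : Tendsto (fun m : ℕ => 1 / ((m : ℝ) + 1)) atTop (nhds 0) :=
      tendsto_one_div_add_atTop_nhds_zero_nat
    have h4 := h1.add ((((h2.mul_const r).add h3).div_const δ).const_mul R)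
    simpa using h4
  obtain ⟨n, hn1, hn2⟩ :=
    ((hlim.eventually (gt_mem_nhds hr)).and (eventually_ge_atTop N)).exists
  -- the map
  set A : EuclideanSpace ℂ (Fin k) := (fderiv ℂ (Sc n) p) ξ with hA
  set v : EuclideanSpace ℂ (Fin k) := R • A with hv
  set τ : ℂ → EuclideanSpace ℂ (Fin k) := fun x => scInv Sinv n (Sc n p + x • v) with hτ
  have hvnorm : ‖v‖ = R * ‖A‖ := by
    rw [hv, norm_smul, Real.norm_eq_abs, abs_of_pos hR]
  have hτdiff : Differentiable ℂ τ :=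
    (hScinvdiff n).comp ((differentiable_id.smul_const v).const_add (Sc n p))
  have hsmall : ∀ x : ℂ, x ∈ ball (0 : ℂ) 1 →
      Sc n p + x • v ∈ ball (0 : EuclideanSpace ℂ (Fin k)) r := by
    intro x hx
    rw [mem_ball_zero_iff] at hx ⊢
    have h1 : ‖Sc n p + x • v‖ ≤ ‖Sc n p‖ + ‖x‖ * ‖v‖ := by
      calc ‖Sc n p + x • v‖ ≤ ‖Sc n p‖ + ‖x • v‖ := norm_add_le _ _
        _ = ‖Sc n p‖ + ‖x‖ * ‖v‖ := by rw [norm_smul]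
    have h2 : ‖x‖ * ‖v‖ ≤ ‖v‖ := by nlinarith [norm_nonneg v, norm_nonneg x]
    have h3 : ‖v‖ ≤ R * ((C ^ (n - N) * r + 1 / (n + 1)) / δ) := by
      rw [hvnorm]; exact mul_le_mul_of_nonneg_left (hkey n hn2) (le_of_lt hR)
    linarith
  refine ⟨τ, hτdiff.differentiableOn, ?_, ?_, ?_⟩
  · intro x hx
    have h1 : Sc n (τ x) = Sc n p + x • v := hright n _
    exact hbasin n (τ x) (h1 ▸ hsmall x hx)
  · rw [hτ]; simp only [zero_smul, add_zero]; exact hleft n p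
  · have h1 : HasDerivAt (fun x : ℂ => Sc n p + x • v) v 0 := by
      simpa using ((hasDerivAt_id (0 : ℂ)).smul_const v).const_add (Sc n p)
    have h2 : HasFDerivAt (scInv Sinv n) (fderiv ℂ (scInv Sinv n) (Sc n p))
        (Sc n p + (0 : ℂ) • v) := by
      simpa using ((hScinvdiff n) (Sc n p)).hasFDerivAt
    have h3 : HasDerivAt τ ((fderiv ℂ (scInv Sinv n) (Sc n p)) v) 0 :=
      h2.comp_hasDerivAt 0 h1
    have h4 : (fderiv ℂ (scInv Sinv n) (Sc n p)) v = R • ξ := by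
      have hcomp : (scInv Sinv n) ∘ (Sc n) = id := funext (hleft n)
      have h5 : fderiv ℂ ((scInv Sinv n) ∘ (Sc n)) p =
          (fderiv ℂ (scInv Sinv n) (Sc n p)).comp (fderiv ℂ (Sc n) p) :=
        fderiv_comp p ((hScinvdiff n) (Sc n p)) ((hScdiff n) p)
      rw [hcomp, fderiv_id] at h5
      have h6 : (fderiv ℂ (scInv Sinv n) (Sc n p)) A = ξ := by
        have := congrArg (fun (L : EuclideanSpace ℂ (Fin k) →L[ℂ] EuclideanSpace ℂ (Fin k)) => L ξ) h5
        simpa using this.symm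
      rw [hv, (fderiv ℂ (scInv Sinv n) (Sc n p)).map_smul_of_tower, h6]
    rw [← h4]; exact h3
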